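/- There is no continuous function f : S² → ℂ \ {0} such that f(-x) · conj(f(x)) = -1 for every x ∈ S². -/

import Mathlib

open Complex Finset Real Set

lemma tele_prod (u : ℕ → ℂ) (hu : ∀ k, u k ≠ 0) (n : ℕ) :
    ∏ k ∈ Finset.range n, u (k+1) / u k = u n / u 0 := by
  induction n with
  | zero => simp [div_self (hu 0)]
  | succ n ih =>
      rw [Finset.prod_range_succ, ih, mul_comm, div_mul_div_cancel₀ (hu n)]

lemma mem_slit_of_close (u : ℂ) (h : ‖1 - u‖ < 1) : u ∈ Complex.slitPlane := by
  refine Or.inl ?_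
  have h1 : (1 - u).re ≤ ‖1 - u‖ := Complex.re_le_norm _
  have h2 : (1 - u).re = 1 - u.re := by simp
  linarith

lemma exp_arg_of_abs_one {z : ℂ} (hz : ‖z‖ = 1) :
    Complex.exp (z.arg * I) = z := by
  have := Complex.norm_mul_exp_arg_mul_I z
  rwa [hz, Complex.ofReal_one, one_mul] at this

lemma real_of_exp_eq_one {r : ℝ} (h : Complex.exp (r * I) = 1) :
    ∃ m : ℤ, r = 2 * Real.pi * m := by
  rw [Complex.exp_eq_one_iff] at h
  obtain ⟨m, hm⟩ := h
  refine ⟨m, ?_⟩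
  have : (r : ℂ) = 2 * Real.pi * (m : ℂ) := by
    have := mul_right_cancel₀ Complex.I_ne_zero (by linear_combination hm :
      (r : ℂ) * I = ((m : ℂ) * (2 * Real.pi)) * I)
    linear_combination this
  exact_mod_cast this

lemma int_valued_const {a b : ℝ} (hab : a ≤ b) (W : ℝ → ℝ)
    (hW : ContinuousOn W (Icc a b))
    (hint : ∀ s ∈ Icc a b, ∃ m : ℤ, W s = m) : W a = W b := by
  by_contra hne
  have ha : a ∈ Icc a b := by constructor <;> linarith
  have hb : b ∈ Icc a b := by constructor <;> linarith
  obtain ⟨ma, hma⟩ := hint a ha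
  obtain ⟨mb, hmb⟩ := hint b hb
  have key : ∀ c : ℝ, c ∈ Icc (W a) (W b) ∪ Icc (W b) (W a) → ∃ m : ℤ, c = m := by
    intro c hc
    have : c ∈ W '' Icc a b := by
      rcases hc with hc | hc
      · exact intermediate_value_Icc hab hW hc
      · exact intermediate_value_Icc' hab hW hc
    obtain ⟨s, hs, hsc⟩ := this
    obtain ⟨m, hm⟩ := hint s hs
    exact ⟨m, by rw [← hsc, hm]⟩
  rcases lt_or_gt_of_ne hne with hlt | hlt
  · have hmamb : ma < mb := by
      have : (ma:ℝ) < mb := by rw [← hma, ← hmb]; exact hlt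
      exact_mod_cast this
    have h1 : W a + 1/2 ∈ Icc (W a) (W b) := by
      have : (ma : ℝ) + 1 ≤ mb := by exact_mod_cast hmamb
      constructor
      · linarith
      · rw [hma, hmb] at *; linarith
    obtain ⟨m, hm⟩ := key _ (Or.inl h1)
    rw [hma] at hm
    have h2 : (2*m : ℝ) = 2*ma + 1 := by push_cast; linarith
    have : 2*m = 2*ma + 1 := by exact_mod_cast h2
    omega
  · have hmamb : mb < ma := by
      have : (mb:ℝ) < ma := by rw [← hma, ← hmb]; exact hlt
      exact_mod_cast this
    have h1 : W b + 1/2 ∈ Icc (W b) (W a) := by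
      have : (mb : ℝ) + 1 ≤ ma := by exact_mod_cast hmamb
      constructor
      · linarith
      · rw [hma, hmb] at *; linarith
    obtain ⟨m, hm⟩ := key _ (Or.inr h1)
    rw [hmb] at hm
    have h2 : (2*m : ℝ) = 2*mb + 1 := by push_cast; linarith
    have : 2*m = 2*mb + 1 := by exact_mod_cast h2
    omega

noncomputable def Pmap (p : ℝ × ℝ) : EuclideanSpace ℝ (Fin 3) :=
  (Real.cos p.1 * Real.cos p.2) • EuclideanSpace.single (0 : Fin 3) (1:ℝ)
  + (Real.sin p.1 * Real.cos p.2) • EuclideanSpace.single (1 : Fin 3) (1:ℝ)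
  + Real.sin p.2 • EuclideanSpace.single (2 : Fin 3) (1:ℝ)

lemma Pmap_norm (p : ℝ × ℝ) : ‖Pmap p‖ = 1 := by
  rw [EuclideanSpace.norm_eq]
  have h1 : ∀ j : Fin 3, (Pmap p) j =
      ![Real.cos p.1 * Real.cos p.2, Real.sin p.1 * Real.cos p.2, Real.sin p.2] j := by
    intro j
    fin_cases j <;>
      simp [Pmap, EuclideanSpace.single_apply, PiLp.add_apply, PiLp.smul_apply]
  rw [show (∑ i, ‖Pmap p i‖^2) = ∑ i : Fin 3,
      ‖![Real.cos p.1 * Real.cos p.2, Real.sin p.1 * Real.cos p.2, Real.sin p.2] i‖^2 from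
    Finset.sum_congr rfl (fun i _ => by rw [h1 i])]
  rw [Fin.sum_univ_three]
  simp only [Matrix.cons_val_zero, Matrix.cons_val_one, Matrix.head_cons, Real.norm_eq_abs,
    sq_abs, Matrix.cons_val_two, Matrix.tail_cons]
  rw [show (Real.cos p.1 * Real.cos p.2) ^ 2 + (Real.sin p.1 * Real.cos p.2) ^ 2
        + Real.sin p.2 ^ 2 = 1 from by
      nlinarith [Real.sin_sq_add_cos_sq p.1, Real.sin_sq_add_cos_sq p.2]]
  exact Real.sqrt_one

lemma Pmap_cont : Continuous Pmap := by unfold Pmap; fun_prop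

lemma Pmap_per (t s : ℝ) : Pmap (t + 2*π, s) = Pmap (t, s) := by
  simp [Pmap, Real.cos_add_two_pi, Real.sin_add_two_pi]

lemma Pmap_top (t : ℝ) : Pmap (t, π/2) = Pmap (0, π/2) := by
  simp [Pmap, Real.cos_pi_div_two, Real.sin_pi_div_two]

lemma Pmap_anti (t : ℝ) : Pmap (t + π, 0) = - Pmap (t, 0) := by
  simp only [Pmap, Real.cos_add_pi, Real.sin_add_pi, Real.sin_zero, Real.cos_zero]
  module

lemma no_odd_circle_map (g : (Metric.sphere (0 : EuclideanSpace ℝ (Fin 3)) 1) → ℂ)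
    (hg : Continuous g) (habs : ∀ x, ‖g x‖ = 1)
    (hodd : ∀ x, g (-x) = - g x) : False := by
  classical
  -- the sphere-valued parametrization
  set Q : ℝ × ℝ → Metric.sphere (0 : EuclideanSpace ℝ (Fin 3)) 1 :=
    fun p => ⟨Pmap p, by rw [mem_sphere_zero_iff_norm]; exact Pmap_norm p⟩ with hQ
  have hQc : Continuous Q := Continuous.subtype_mk Pmap_cont _
  set F : ℝ × ℝ → ℂ := fun p => g (Q p) with hF
  have hFc : Continuous F := hg.comp hQc
  have hFabs : ∀ p, ‖F p‖ = 1 := fun p => habs _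
  have hFne : ∀ p, F p ≠ 0 := fun p => by
    intro h0; have := hFabs p; rw [h0] at this; simp at this
  -- boundary identities
  have hper : ∀ t s, F (t + 2*π, s) = F (t, s) := by
    intro t s
    have : Q (t + 2*π, s) = Q (t, s) := Subtype.ext (Pmap_per t s)
    simp only [hF, this]
  have htop : ∀ t, F (t, π/2) = F (0, π/2) := by
    intro t
    have : Q (t, π/2) = Q (0, π/2) := Subtype.ext (Pmap_top t)
    simp only [hF, this]
  have hanti : ∀ t, F (t + π, 0) = - F (t, 0) := by
    intro t
    have hQa : Q (t + π, 0) = - Q (t, 0) := by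
      apply Subtype.ext
      rw [coe_neg_sphere]
      exact Pmap_anti t
    rw [hF]
    show g (Q (t + π, 0)) = - g (Q (t,0))
    rw [hQa, hodd]
  -- uniform continuity on the rectangle
  set R : Set (ℝ × ℝ) := Icc (0:ℝ) (2*π) ×ˢ Icc (0:ℝ) (π/2) with hR
  have hRcomp : IsCompact R := isCompact_Icc.prod isCompact_Icc
  have hUC := hRcomp.uniformContinuousOn_of_continuous hFc.continuousOn
  rw [Metric.uniformContinuousOn_iff] at hUC
  obtain ⟨δ, hδ, hδ1⟩ := hUC 1 one_pos
  obtain ⟨n, hn⟩ := exists_nat_gt (2*π/δ)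
  have hπ : (0:ℝ) < π := Real.pi_pos
  have hn0 : 0 < (n:ℝ) := lt_trans (by positivity) hn
  have hstep : 2*π/(n:ℝ) < δ := by
    rw [div_lt_iff₀ hn0]
    calc 2*π = (2*π/δ) * δ := by field_simp
    _ < n * δ := by exact mul_lt_mul_of_pos_right hn hδ
    _ = δ * n := mul_comm _ _
  -- the discretized argument lift
  set θ : ℝ × ℝ → ℝ := fun p =>
      (∑ k ∈ Finset.range n, (F (p.1 * ((k:ℕ)+1:ℕ) / n, 0) / F (p.1 * (k:ℕ) / n, 0)).arg)
    + (∑ k ∈ Finset.range n, (F (p.1, p.2 * ((k:ℕ)+1:ℕ) / n) / F (p.1, p.2 * (k:ℕ) / n)).arg)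
    with hθ
  -- exponential identity
  have expSum : ∀ u : ℕ → ℝ × ℝ,
      Complex.exp ((∑ k ∈ Finset.range n, (F (u (k+1)) / F (u k)).arg : ℝ) * I)
        = F (u n) / F (u 0) := by
    intro u
    rw [Complex.ofReal_sum, Finset.sum_mul, Complex.exp_sum]
    rw [Finset.prod_congr rfl (fun k _ => exp_arg_of_abs_one
      (by rw [norm_div, hFabs, hFabs, div_one]))]
    exact tele_prod (fun k => F (u k)) (fun k => hFne _) n
  have hexp : ∀ p, Complex.exp ((θ p : ℝ) * I) = F p / F (0, 0) := by
    intro p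
    rw [hθ]
    simp only
    rw [Complex.ofReal_add, add_mul, Complex.exp_add]
    have e1 := expSum (fun k => (p.1 * (k:ℕ) / n, 0))
    have e2 := expSum (fun k => (p.1, p.2 * (k:ℕ) / n))
    rw [e1, e2]
    have hnn : p.1 * (n:ℝ) / n = p.1 := by field_simp
    have hnn2 : p.2 * (n:ℝ) / n = p.2 := by field_simp
    rw [hnn, hnn2]
    simp only [Nat.cast_zero, mul_zero, zero_div]
    rw [mul_comm, div_mul_div_cancel₀ (hFne _)]
  -- continuity of θ on R
  have hmemR : ∀ p ∈ R, ∀ (c : ℝ), 0 ≤ c → c ≤ 1 → (p.1 * c, 0) ∈ R ∧ (p.1, p.2 * c) ∈ R := by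
    intro p hp c hc0 hc1
    simp only [hR, Set.mem_prod, Set.mem_Icc] at hp ⊢
    obtain ⟨⟨h1, h2⟩, h3, h4⟩ := hp
    have e1 : p.1 * c ≤ p.1 := by nlinarith
    have e2 : p.2 * c ≤ p.2 := by nlinarith
    exact ⟨⟨⟨by positivity, by linarith⟩, le_refl 0, by positivity⟩,
      ⟨h1, h2⟩, by positivity, by linarith⟩
  have step : ∀ (a b : ℝ × ℝ → ℝ × ℝ), Continuous a → Continuous b →
      (∀ p ∈ R, a p ∈ R) → (∀ p ∈ R, b p ∈ R) → (∀ p ∈ R, dist (a p) (b p) < δ) →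
      ContinuousOn (fun p => (F (a p) / F (b p)).arg) R := by
    intro a b ha hb haR hbR hd
    intro p hp
    apply ContinuousAt.continuousWithinAt
    have hratio : ContinuousAt (fun q => F (a q) / F (b q)) p :=
      ContinuousAt.div ((hFc.comp ha).continuousAt) ((hFc.comp hb).continuousAt) (hFne _)
    have hslit : F (a p) / F (b p) ∈ Complex.slitPlane := by
      apply mem_slit_of_close
      have hclose : dist (F (a p)) (F (b p)) < 1 := hδ1 _ (haR p hp) _ (hbR p hp) (hd p hp)
      have habsb : ‖F (b p)‖ = 1 := hFabs _
      have hbne := hFne (b p)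
      have heq : ‖1 - F (a p) / F (b p)‖
          = ‖F (a p) - F (b p)‖ := by
        rw [show (1 : ℂ) - F (a p) / F (b p) = -((F (a p) - F (b p)) / F (b p)) from by
          field_simp; ring, norm_neg, norm_div, habsb, div_one]
      rw [heq]
      rwa [Complex.dist_eq] at hclose
    exact ContinuousAt.comp (x := p) (g := Complex.arg) (Complex.continuousAt_arg hslit) hratio
  have h2π : (0:ℝ) < 2*π := by positivity
  -- continuity of θ on R
  have distcalc : ∀ (x : ℝ) (k : ℕ), x * ((k:ℕ)+1:ℕ) / n - x * (k:ℕ) / n = x / n := by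
    intro x k
    push_cast
    field_simp
    ring
  have hθcont : ContinuousOn θ R := by
    rw [hθ]
    apply ContinuousOn.add
    · apply continuousOn_finset_sum
      intro k hk
      have hkn : (k:ℝ) + 1 ≤ n := by exact_mod_cast Finset.mem_range.mp hk
      apply step (fun p => (p.1 * ((k:ℕ)+1:ℕ) / n, 0)) (fun p => (p.1 * (k:ℕ) / n, 0))
        (by fun_prop) (by fun_prop)
      · intro p hp
        have := (hmemR p hp ((((k:ℕ)+1:ℕ):ℝ) / n) (by positivity)
          (by rw [div_le_one hn0]; push_cast; linarith)).1
        rwa [← mul_div_assoc] at this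
      · intro p hp
        have := (hmemR p hp (((k:ℕ):ℝ) / n) (by positivity)
          (by rw [div_le_one hn0]; push_cast; linarith)).1
        rwa [← mul_div_assoc] at this
      · intro p hp
        simp only [hR, Set.mem_prod, Set.mem_Icc] at hp
        obtain ⟨⟨h1, h2⟩, h3, h4⟩ := hp
        rw [Prod.dist_eq]
        simp only [Real.dist_eq, sub_self, abs_zero]
        rw [max_eq_left (abs_nonneg _), distcalc, _root_.abs_of_nonneg (by positivity)]
        calc p.1 / (n:ℝ) ≤ 2*π / n := (div_le_div_iff_of_pos_right hn0).mpr h2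
          _ < δ := hstep
    · apply continuousOn_finset_sum
      intro k hk
      have hkn : (k:ℝ) + 1 ≤ n := by exact_mod_cast Finset.mem_range.mp hk
      apply step (fun p => (p.1, p.2 * ((k:ℕ)+1:ℕ) / n)) (fun p => (p.1, p.2 * (k:ℕ) / n))
        (by fun_prop) (by fun_prop)
      · intro p hp
        have := (hmemR p hp ((((k:ℕ)+1:ℕ):ℝ) / n) (by positivity)
          (by rw [div_le_one hn0]; push_cast; linarith)).2
        rwa [← mul_div_assoc] at this
      · intro p hp
        have := (hmemR p hp (((k:ℕ):ℝ) / n) (by positivity)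
          (by rw [div_le_one hn0]; push_cast; linarith)).2
        rwa [← mul_div_assoc] at this
      · intro p hp
        simp only [hR, Set.mem_prod, Set.mem_Icc] at hp
        obtain ⟨⟨h1, h2⟩, h3, h4⟩ := hp
        rw [Prod.dist_eq]
        simp only [Real.dist_eq, sub_self, abs_zero]
        rw [max_eq_right (abs_nonneg _), distcalc, _root_.abs_of_nonneg (by positivity)]
        calc p.2 / (n:ℝ) ≤ 2*π / n := (div_le_div_iff_of_pos_right hn0).mpr (by linarith)
          _ < δ := hstep
  -- difference of lifts
  have hquot : ∀ a b : ℝ × ℝ, Complex.exp ((θ a - θ b : ℝ) * I) = F a / F b := by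
    intro a b
    rw [Complex.ofReal_sub, sub_mul, Complex.exp_sub, hexp, hexp,
      div_div_div_cancel_right₀ (hFne (0,0))]
  -- constancy of integer-valued continuous functions
  have constOn : ∀ (A B : ℝ), A ≤ B → ∀ W : ℝ → ℝ, ContinuousOn W (Icc A B) →
      (∀ x ∈ Icc A B, ∃ m : ℤ, W x = 2*π*m) → W A = W B := by
    intro A B hAB W hWc hWi
    have hic := int_valued_const hAB (fun x => W x / (2*π)) (hWc.div_const _) ?_
    · field_simp at hic
      exact hic
    · intro s hs
      obtain ⟨m, hm⟩ := hWi s hs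
      refine ⟨m, ?_⟩
      show W s / (2*π) = (m:ℝ)
      rw [hm]
      field_simp
  -- (1) bottom: half-turn increment is constant
  set V : ℝ → ℝ := fun t => θ (t + π, 0) - θ (t, 0) with hV
  have hVexp : ∀ t, Complex.exp ((V t : ℝ) * I) = -1 := by
    intro t
    rw [hV]
    simp only
    rw [hquot (t + π, 0) (t, 0), hanti, neg_div, div_self (hFne _)]
  have hVconst : V 0 = V π := by
    have := constOn 0 π (le_of_lt hπ) (fun t => V t - π) ?_ ?_
    · linarith
    · apply ContinuousOn.sub _ continuousOn_const
      apply ContinuousOn.sub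
      · apply (hθcont.comp (Continuous.continuousOn (by fun_prop))) ?_
        intro t ht
        simp only [hR, Set.mem_prod, Set.mem_Icc] at *
        obtain ⟨ht1, ht2⟩ := ht
        exact ⟨⟨by linarith, by linarith⟩, le_refl 0, by linarith⟩
      · apply (hθcont.comp (Continuous.continuousOn (by fun_prop))) ?_
        intro t ht
        simp only [hR, Set.mem_prod, Set.mem_Icc] at *
        obtain ⟨ht1, ht2⟩ := ht
        exact ⟨⟨by linarith, by linarith⟩, le_refl 0, by linarith⟩
    · intro t ht
      apply real_of_exp_eq_one
      rw [Complex.ofReal_sub, sub_mul, Complex.exp_sub, hVexp, Complex.exp_pi_mul_I]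
      norm_num
  -- (2) top: loop at the pole has zero winding
  have hTop : θ (2*π, π/2) = θ (0, π/2) := by
    have := constOn 0 (2*π) (by positivity) (fun t => θ (t, π/2) - θ (0, π/2)) ?_ ?_
    · linarith
    · apply ContinuousOn.sub _ continuousOn_const
      apply (hθcont.comp (Continuous.continuousOn (by fun_prop))) ?_
      intro t ht
      simp only [hR, Set.mem_prod, Set.mem_Icc] at *
      obtain ⟨ht1, ht2⟩ := ht
      exact ⟨⟨by linarith, by linarith⟩, by linarith, le_refl _⟩
    · intro t ht
      apply real_of_exp_eq_one
      rw [hquot (t, π/2) (0, π/2), htop t, div_self (hFne _)]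
  -- (3) total winding is constant in latitude
  have hW : θ (2*π, 0) - θ (0, 0) = θ (2*π, π/2) - θ (0, π/2) := by
    have := constOn 0 (π/2) (by positivity) (fun s => θ (2*π, s) - θ (0, s)) ?_ ?_
    · simpa using this
    · apply ContinuousOn.sub
      · apply (hθcont.comp (Continuous.continuousOn (by fun_prop))) ?_
        intro s hs
        simp only [hR, Set.mem_prod, Set.mem_Icc] at *
        obtain ⟨hs1, hs2⟩ := hs
        exact ⟨⟨by linarith, le_refl _⟩, by linarith, by linarith⟩
      · apply (hθcont.comp (Continuous.continuousOn (by fun_prop))) ?_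
        intro s hs
        simp only [hR, Set.mem_prod, Set.mem_Icc] at *
        obtain ⟨hs1, hs2⟩ := hs
        exact ⟨⟨le_refl _, by positivity⟩, by linarith, by linarith⟩
    · intro s hs
      apply real_of_exp_eq_one
      have h20 : (2*π : ℝ) = 0 + 2*π := by ring
      rw [hquot (2*π, s) (0, s), h20, hper 0 s, div_self (hFne _)]
  -- put it together
  obtain ⟨m, hm⟩ : ∃ m : ℤ, V 0 - π = 2*π*m := by
    apply real_of_exp_eq_one
    rw [Complex.ofReal_sub, sub_mul, Complex.exp_sub, hVexp, Complex.exp_pi_mul_I]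
    norm_num
  have hsplit : θ (2*π, 0) - θ (0, 0) = V π + V 0 := by
    rw [hV]
    simp only
    rw [show (π:ℝ) + π = 2*π from by ring, zero_add]
    ring
  have hzero : θ (2*π, π/2) - θ (0, π/2) = 0 := by rw [hTop]; ring
  rw [hzero, hsplit, ← hVconst] at hW
  -- hW : V 0 + V 0 = 0, with V 0 = π + 2πm
  have : 2*π*(2*(m:ℝ)+1) = 0 := by linarith
  have h21 : (2*(m:ℝ)+1) = 0 := by
    rcases mul_eq_zero.mp this with h | h
    · linarith
    · exact h
  have : 2*m+1 = (0:ℤ) := by exact_mod_cast h21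
  omega


/-- There is no continuous function `f : S² → ℂ \ {0}` such that
`f (-x) * conj (f x) = -1` for every `x ∈ S²`. -/
theorem no_antilinear_square_neg_one
    (f : Metric.sphere (0 : EuclideanSpace ℝ (Fin 3)) 1 → ℂ)
    (hf : Continuous f)
    (hne : ∀ x, f x ≠ 0)
    (h : ∀ x, f (-x) * (starRingEnd ℂ) (f x) = -1) : False := by
  apply no_odd_circle_map (fun x => f x / (‖f x‖ : ℂ))
  · apply hf.div (Complex.continuous_ofReal.comp (continuous_norm.comp hf))
    intro x
    exact Complex.ofReal_ne_zero.mpr (norm_ne_zero_iff.mpr (hne x))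
  · intro x
    show ‖f x / (‖f x‖ : ℂ)‖ = 1
    rw [norm_div, Complex.norm_real, norm_norm,
      div_self (norm_ne_zero_iff.mpr (hne x))]
  · intro x
    show f (-x) / (‖f (-x)‖ : ℂ) = -(f x / (‖f x‖ : ℂ))
    have h1 := h x
    have hane : ‖f x‖ ≠ 0 := norm_ne_zero_iff.mpr (hne x)
    have ha0 : (‖f x‖ : ℂ) ≠ 0 := Complex.ofReal_ne_zero.mpr hane
    have hmc : f x * (starRingEnd ℂ) (f x) = ((‖f x‖ : ℂ))^2 := by
      rw [Complex.mul_conj]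
      norm_cast
      rw [Complex.sq_norm]
    have h3 : f (-x) * ((‖f x‖ : ℂ))^2 = - f x := by
      rw [← hmc]
      linear_combination f x * h1
    have h2 : f (-x) = - f x / ((‖f x‖ : ℂ))^2 := by
      rw [eq_div_iff (pow_ne_zero 2 ha0)]
      exact h3
    have hb : ‖f (-x)‖ = (‖f x‖)⁻¹ := by
      rw [h2, norm_div, norm_neg, norm_pow, Complex.norm_real,
        norm_norm]
      field_simp
    rw [hb, h2]
    push_cast
    field_simp
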